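/- Let q ≥ 1, let γ₁ > ⋯ > γ_q be nonzero reals with γ₁ > 0, let δ₁, …, δ_q ≥ 0, ε ≥ 0 and k* ∈ ℝ, and define f(λ) := Σᵢ₌₁^q γᵢδᵢ²/(1 − λγᵢ)² + 2ε²λ − k* on the open interval Λ° := (−∞, 1/γ₁) if γ_q > 0 and Λ° := (1/γ_q, 1/γ₁) if γ_q < 0. If δ = 0 and ε = 0, then f is constantly −k* on Λ°. Otherwise f is continuous and strictly increasing on Λ°, and its supremum and infimum over Λ° are: sup f = f₁ := Σᵢ₌₂^q γᵢδᵢ²/(1 − γᵢ/γ₁)² + 2ε²/γ₁ − k* if δ₁ = 0, and sup f = +∞ if δ₁ > 0; if γ_q < 0, inf f = f_q := Σᵢ₌₁^{q−1} γᵢδᵢ²/(1 − γᵢ/γ_q)² + 2ε²/γ_q − k* if δ_q = 0, and inf f = −∞ if δ_q > 0; if γ_q > 0, inf f = −k* if ε = 0 and inf f = −∞ if ε > 0. -/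

import Mathlib

open Matrix

open Filter Topology

lemma aux_isLUB {f : ℝ → ℝ} {S : Set ℝ} {L : Filter ℝ} [L.NeBot] {M : ℝ}
    (hmem : ∀ᶠ x in L, x ∈ S)
    (hub : ∀ x ∈ S, ∀ᶠ y in L, f x ≤ f y)
    (hlim : Tendsto f L (𝓝 M)) : IsLUB (f '' S) M := by
  constructor
  · rintro _ ⟨x, hx, rfl⟩
    exact ge_of_tendsto hlim (hub x hx)
  · intro b hb
    exact le_of_tendsto hlim (hmem.mono fun y hy => hb ⟨y, hy, rfl⟩)

lemma aux_isGLB {f : ℝ → ℝ} {S : Set ℝ} {L : Filter ℝ} [L.NeBot] {M : ℝ}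
    (hmem : ∀ᶠ x in L, x ∈ S)
    (hlb : ∀ x ∈ S, ∀ᶠ y in L, f y ≤ f x)
    (hlim : Tendsto f L (𝓝 M)) : IsGLB (f '' S) M := by
  constructor
  · rintro _ ⟨x, hx, rfl⟩
    exact le_of_tendsto hlim (hlb x hx)
  · intro b hb
    exact ge_of_tendsto hlim (hmem.mono fun y hy => hb ⟨y, hy, rfl⟩)

lemma aux_not_bddAbove {f : ℝ → ℝ} {S : Set ℝ} {L : Filter ℝ} [L.NeBot]
    (hmem : ∀ᶠ x in L, x ∈ S) (hlim : Tendsto f L atTop) : ¬ BddAbove (f '' S) := by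
  rintro ⟨b, hb⟩
  obtain ⟨y, hy, hyS⟩ := ((hlim.eventually_gt_atTop b).and hmem).exists
  exact absurd (hb ⟨y, hyS, rfl⟩) (not_le.2 hy)

lemma aux_not_bddBelow {f : ℝ → ℝ} {S : Set ℝ} {L : Filter ℝ} [L.NeBot]
    (hmem : ∀ᶠ x in L, x ∈ S) (hlim : Tendsto f L atBot) : ¬ BddBelow (f '' S) := by
  rintro ⟨b, hb⟩
  obtain ⟨y, hy, hyS⟩ := ((hlim.eventually_lt_atBot b).and hmem).exists
  exact absurd (hb ⟨y, hyS, rfl⟩) (not_le.2 hy)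

noncomputable def auxF {q : ℕ} (γ δ : Fin q → ℝ) (ε kstar : ℝ) (lam : ℝ) : ℝ :=
  (∑ i, γ i * δ i ^ 2 / (1 - lam * γ i) ^ 2) + 2 * ε ^ 2 * lam - kstar

lemma auxF_hasDerivAt {q : ℕ} (γ δ : Fin q → ℝ) (ε kstar lam : ℝ)
    (h : ∀ i, 1 - lam * γ i ≠ 0) :
    HasDerivAt (auxF γ δ ε kstar)
      ((∑ i, 2 * γ i ^ 2 * δ i ^ 2 / (1 - lam * γ i) ^ 3) + 2 * ε ^ 2) lam := by
  have hsum : HasDerivAt (fun x => ∑ i, γ i * δ i ^ 2 / (1 - x * γ i) ^ 2)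
      (∑ i, 2 * γ i ^ 2 * δ i ^ 2 / (1 - lam * γ i) ^ 3) lam := by
    refine HasDerivAt.fun_sum fun i _ => ?_
    have hu : HasDerivAt (fun x : ℝ => (1 - x * γ i) ^ 2)
        (2 * (1 - lam * γ i) ^ 1 * (-(γ i))) lam := by
      have : HasDerivAt (fun x : ℝ => 1 - x * γ i) (-(γ i)) lam := by
        simpa using ((hasDerivAt_id lam).mul_const (γ i)).const_sub 1
      exact this.pow 2
    have hd := (hasDerivAt_const lam (γ i * δ i ^ 2)).fun_div hu (pow_ne_zero 2 (h i))
    convert hd using 1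
    · rfl
    have := h i
    field_simp
    ring
  unfold auxF; simpa using (hsum.add ((hasDerivAt_id lam).const_mul (2 * ε ^ 2))).sub_const kstar

lemma aux_deriv_pos {q : ℕ} (γ δ : Fin q → ℝ) (ε : ℝ) (hne : ∀ i, γ i ≠ 0)
    (hne0 : δ ≠ 0 ∨ ε ≠ 0) (lam : ℝ) (h : ∀ i, 0 < 1 - lam * γ i) :
    0 < (∑ i, 2 * γ i ^ 2 * δ i ^ 2 / (1 - lam * γ i) ^ 3) + 2 * ε ^ 2 := by
  have hterm : ∀ i, 0 ≤ 2 * γ i ^ 2 * δ i ^ 2 / (1 - lam * γ i) ^ 3 := fun i =>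
    div_nonneg (by positivity) (pow_nonneg (h i).le 3)
  rcases hne0 with h0 | h0
  · obtain ⟨i, hi⟩ := Function.ne_iff.1 h0
    have hi' : δ i ≠ 0 := by simpa using hi
    have hnum : 0 < 2 * γ i ^ 2 * δ i ^ 2 := by
      have h1 : 0 < γ i ^ 2 := lt_of_le_of_ne (sq_nonneg _) (Ne.symm (pow_ne_zero 2 (hne i)))
      have h2 : 0 < δ i ^ 2 := lt_of_le_of_ne (sq_nonneg _) (Ne.symm (pow_ne_zero 2 hi'))
      positivity
    have hone : 0 < 2 * γ i ^ 2 * δ i ^ 2 / (1 - lam * γ i) ^ 3 :=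
      div_pos hnum (pow_pos (h i) 3)
    have hsum := Finset.sum_pos' (fun j _ => hterm j) ⟨i, Finset.mem_univ i, hone⟩
    nlinarith [sq_nonneg ε]
  · have h2 : 0 < 2 * ε ^ 2 := by
      have := lt_of_le_of_ne (sq_nonneg ε) (Ne.symm (pow_ne_zero 2 h0))
      linarith
    have hsum := Finset.sum_nonneg fun i (_ : i ∈ Finset.univ) => hterm i
    linarith

lemma aux_main {q : ℕ} (hq : 0 < q) (γ : Fin q → ℝ) (hanti : StrictAnti γ)
    (hne : ∀ i, γ i ≠ 0) (hpos : 0 < γ ⟨0, hq⟩)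
    (δ : Fin q → ℝ) (hδ : ∀ i, 0 ≤ δ i) (ε kstar : ℝ)
    (S : Set ℝ) (hSopen : IsOpen S) (hSconv : Convex ℝ S) (hSne : S.Nonempty)
    (hSpos : ∀ lam ∈ S, ∀ i, 0 < 1 - lam * γ i)
    (hSsub : S ⊆ Set.Iio (γ ⟨0, hq⟩)⁻¹)
    (hSmem : ∀ᶠ x in 𝓝[<] (γ ⟨0, hq⟩)⁻¹, x ∈ S)
    (hne0 : δ ≠ 0 ∨ ε ≠ 0) :
    ContinuousOn (auxF γ δ ε kstar) S ∧ StrictMonoOn (auxF γ δ ε kstar) S ∧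
    (δ ⟨0, hq⟩ = 0 → sSup (auxF γ δ ε kstar '' S) =
      (∑ i ∈ Finset.univ.erase ⟨0, hq⟩, γ i * δ i ^ 2 / (1 - γ i / γ ⟨0, hq⟩) ^ 2)
        + 2 * ε ^ 2 / γ ⟨0, hq⟩ - kstar) ∧
    (0 < δ ⟨0, hq⟩ → ¬ BddAbove (auxF γ δ ε kstar '' S)) := by
  set i0 : Fin q := ⟨0, hq⟩ with hi0def
  set c : ℝ := (γ i0)⁻¹ with hcdef
  have hc : 0 < c := inv_pos.2 hpos
  have hcont : ContinuousOn (auxF γ δ ε kstar) S := fun x hx =>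
    ((auxF_hasDerivAt γ δ ε kstar x fun i => (hSpos x hx i).ne').continuousAt).continuousWithinAt
  have hmono : StrictMonoOn (auxF γ δ ε kstar) S := by
    refine strictMonoOn_of_deriv_pos hSconv hcont fun x hx => ?_
    rw [hSopen.interior_eq] at hx
    rw [(auxF_hasDerivAt γ δ ε kstar x fun i => (hSpos x hx i).ne').deriv]
    exact aux_deriv_pos γ δ ε hne hne0 x (hSpos x hx)
  have hub : ∀ x ∈ S, ∀ᶠ y in 𝓝[<] c, auxF γ δ ε kstar x ≤ auxF γ δ ε kstar y := by
    intro x hx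
    have hxc : x < c := hSsub hx
    filter_upwards [hSmem, Ioo_mem_nhdsLT_of_mem (⟨hxc, le_refl c⟩ : c ∈ Set.Ioc x c)]
      with y hyS hyx
    exact (hmono hx hyS hyx.1).le
  have hdc : ∀ i, i ≠ i0 → 0 < 1 - c * γ i := by
    intro i hi
    have h1 : γ i < γ i0 := by
      refine hanti ?_
      have : (0 : ℕ) < i.val := Nat.pos_of_ne_zero fun h => hi (Fin.ext h)
      exact Fin.mk_lt_mk.2 this |>.trans_le (le_refl _) |>.trans_le (le_refl _)
    have h2 : c * γ i < c * γ i0 := mul_lt_mul_of_pos_left h1 hc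
    rw [hcdef, inv_mul_cancel₀ hpos.ne'] at h2
    linarith
  have hcv : ∀ x : ℝ, x / γ i0 = c * x := fun x => by
    rw [div_eq_mul_inv, mul_comm, hcdef]
  have hrest : Tendsto (fun lam =>
      (∑ i ∈ Finset.univ.erase i0, γ i * δ i ^ 2 / (1 - lam * γ i) ^ 2)
        + 2 * ε ^ 2 * lam - kstar) (𝓝[<] c)
      (𝓝 ((∑ i ∈ Finset.univ.erase i0, γ i * δ i ^ 2 / (1 - γ i / γ i0) ^ 2)
        + 2 * ε ^ 2 / γ i0 - kstar)) := by
    refine Tendsto.sub_const (Tendsto.add ?_ ?_) kstar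
    · refine tendsto_finset_sum _ fun i hi => ?_
      have hi' : i ≠ i0 := Finset.ne_of_mem_erase hi
      rw [hcv (γ i)]
      have hcont' : ContinuousAt (fun lam : ℝ => γ i * δ i ^ 2 / (1 - lam * γ i) ^ 2) c := by
        refine ContinuousAt.div continuousAt_const (by fun_prop) ?_
        exact pow_ne_zero 2 (hdc i hi').ne'
      exact hcont'.tendsto.mono_left nhdsWithin_le_nhds
    · rw [hcv (2 * ε ^ 2)]
      rw [mul_comm c (2 * ε ^ 2)]
      exact ((continuous_const.mul continuous_id).tendsto c).mono_left nhdsWithin_le_nhds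
  refine ⟨hcont, hmono, ?_, ?_⟩
  · intro hδ0
    have hfeq : auxF γ δ ε kstar = fun lam =>
        (∑ i ∈ Finset.univ.erase i0, γ i * δ i ^ 2 / (1 - lam * γ i) ^ 2)
          + 2 * ε ^ 2 * lam - kstar := by
      funext lam
      unfold auxF
      rw [← Finset.add_sum_erase _ _ (Finset.mem_univ i0), hδ0]
      norm_num
    have hT : Tendsto (auxF γ δ ε kstar) (𝓝[<] c)
        (𝓝 ((∑ i ∈ Finset.univ.erase i0, γ i * δ i ^ 2 / (1 - γ i / γ i0) ^ 2)
          + 2 * ε ^ 2 / γ i0 - kstar)) := by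
      rw [hfeq]; exact hrest
    exact (aux_isLUB hSmem hub hT).csSup_eq (hSne.image _)
  · intro hδ0
    have hsplit : auxF γ δ ε kstar = fun lam =>
        γ i0 * δ i0 ^ 2 / (1 - lam * γ i0) ^ 2 +
        ((∑ i ∈ Finset.univ.erase i0, γ i * δ i ^ 2 / (1 - lam * γ i) ^ 2)
          + 2 * ε ^ 2 * lam - kstar) := by
      funext lam
      unfold auxF
      rw [← Finset.add_sum_erase _ _ (Finset.mem_univ i0)]
      ring
    have hdenom : Tendsto (fun lam => (1 - lam * γ i0) ^ 2) (𝓝[<] c) (𝓝[>] 0) := by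
      refine tendsto_nhdsWithin_of_tendsto_nhds_of_eventually_within _ ?_ ?_
      · have h0 : (1 - c * γ i0) ^ 2 = 0 := by
          rw [hcdef, inv_mul_cancel₀ hpos.ne']; norm_num
        have := ((by fun_prop : Continuous fun lam : ℝ => (1 - lam * γ i0) ^ 2).tendsto c).mono_left
          (nhdsWithin_le_nhds (s := Set.Iio c))
        rwa [h0] at this
      · filter_upwards [self_mem_nhdsWithin] with y (hy : y < c)
        have h1 : y * γ i0 < 1 := by
          have := mul_lt_mul_of_pos_right hy hpos
          rwa [hcdef, inv_mul_cancel₀ hpos.ne'] at this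
        exact Set.mem_Ioi.2 (pow_pos (by linarith) 2)
    have hterm : Tendsto (fun lam => γ i0 * δ i0 ^ 2 / (1 - lam * γ i0) ^ 2) (𝓝[<] c) atTop := by
      have hC : 0 < γ i0 * δ i0 ^ 2 := mul_pos hpos (pow_pos hδ0 2)
      have := (tendsto_inv_nhdsGT_zero.comp hdenom).const_mul_atTop hC
      simpa [div_eq_mul_inv, Function.comp] using this
    have hT : Tendsto (auxF γ δ ε kstar) (𝓝[<] c) atTop := by
      rw [hsplit]
      exact hterm.atTop_add hrest
    exact aux_not_bddAbove hSmem hT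

lemma aux_inf_neg {q : ℕ} (hq : 0 < q) (γ : Fin q → ℝ) (hanti : StrictAnti γ)
    (hne : ∀ i, γ i ≠ 0) (hpos : 0 < γ ⟨0, hq⟩)
    (hneg : γ ⟨q - 1, Nat.sub_lt hq one_pos⟩ < 0)
    (δ : Fin q → ℝ) (hδ : ∀ i, 0 ≤ δ i) (ε kstar : ℝ)
    (hmono : StrictMonoOn (auxF γ δ ε kstar)
      (Set.Ioo (γ ⟨q - 1, Nat.sub_lt hq one_pos⟩)⁻¹ (γ ⟨0, hq⟩)⁻¹)) :
    (δ ⟨q - 1, Nat.sub_lt hq one_pos⟩ = 0 → sInf (auxF γ δ ε kstar ''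
        Set.Ioo (γ ⟨q - 1, Nat.sub_lt hq one_pos⟩)⁻¹ (γ ⟨0, hq⟩)⁻¹) =
      (∑ i ∈ Finset.univ.erase ⟨q - 1, Nat.sub_lt hq one_pos⟩,
        γ i * δ i ^ 2 / (1 - γ i / γ ⟨q - 1, Nat.sub_lt hq one_pos⟩) ^ 2)
        + 2 * ε ^ 2 / γ ⟨q - 1, Nat.sub_lt hq one_pos⟩ - kstar) ∧
    (0 < δ ⟨q - 1, Nat.sub_lt hq one_pos⟩ → ¬ BddBelow (auxF γ δ ε kstar ''
        Set.Ioo (γ ⟨q - 1, Nat.sub_lt hq one_pos⟩)⁻¹ (γ ⟨0, hq⟩)⁻¹)) := by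
  set iq : Fin q := ⟨q - 1, Nat.sub_lt hq one_pos⟩ with hiqdef
  set a : ℝ := (γ iq)⁻¹ with hadef
  set c : ℝ := (γ ⟨0, hq⟩)⁻¹ with hcdef
  have hc : 0 < c := inv_pos.2 hpos
  have ha : a < 0 := inv_neg''.2 hneg
  have hac : a < c := ha.trans hc
  set S : Set ℝ := Set.Ioo a c with hSdef
  have hSmem : ∀ᶠ x in 𝓝[>] a, x ∈ S :=
    Ioo_mem_nhdsGT_of_mem ⟨le_refl a, hac⟩
  have hlb : ∀ x ∈ S, ∀ᶠ y in 𝓝[>] a, auxF γ δ ε kstar y ≤ auxF γ δ ε kstar x := by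
    intro x hx
    filter_upwards [Ioo_mem_nhdsGT_of_mem (⟨le_refl a, hx.1⟩ : a ∈ Set.Ico a x)] with y hy
    exact (hmono ⟨hy.1, hy.2.trans hx.2⟩ hx hy.2).le
  have hdc : ∀ i, i ≠ iq → 0 < 1 - a * γ i := by
    intro i hi
    have h1 : γ iq < γ i := by
      refine hanti ?_
      have h2 : i.val ≤ q - 1 := Nat.le_pred_of_lt i.isLt
      have h3 : i.val ≠ q - 1 := fun h => hi (Fin.ext h)
      exact Fin.mk_lt_mk.2 (lt_of_le_of_ne h2 h3)
    have h2 : a * γ i < a * γ iq := mul_lt_mul_of_neg_left h1 ha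
    rw [hadef, inv_mul_cancel₀ hneg.ne] at h2
    linarith
  have hcv : ∀ x : ℝ, x / γ iq = a * x := fun x => by
    rw [div_eq_mul_inv, mul_comm, hadef]
  have hrest : Filter.Tendsto (fun lam =>
      (∑ i ∈ Finset.univ.erase iq, γ i * δ i ^ 2 / (1 - lam * γ i) ^ 2)
        + 2 * ε ^ 2 * lam - kstar) (𝓝[>] a)
      (𝓝 ((∑ i ∈ Finset.univ.erase iq, γ i * δ i ^ 2 / (1 - γ i / γ iq) ^ 2)
        + 2 * ε ^ 2 / γ iq - kstar)) := by
    refine Filter.Tendsto.sub_const (Filter.Tendsto.add ?_ ?_) kstar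
    · refine tendsto_finset_sum _ fun i hi => ?_
      have hi' : i ≠ iq := Finset.ne_of_mem_erase hi
      rw [hcv (γ i)]
      have hcont' : ContinuousAt (fun lam : ℝ => γ i * δ i ^ 2 / (1 - lam * γ i) ^ 2) a := by
        refine ContinuousAt.div continuousAt_const (by fun_prop) ?_
        exact pow_ne_zero 2 (hdc i hi').ne'
      exact hcont'.tendsto.mono_left nhdsWithin_le_nhds
    · rw [hcv (2 * ε ^ 2), mul_comm a (2 * ε ^ 2)]
      exact ((continuous_const.mul continuous_id).tendsto a).mono_left nhdsWithin_le_nhds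
  constructor
  · intro hδq
    have hfeq : auxF γ δ ε kstar = fun lam =>
        (∑ i ∈ Finset.univ.erase iq, γ i * δ i ^ 2 / (1 - lam * γ i) ^ 2)
          + 2 * ε ^ 2 * lam - kstar := by
      funext lam
      unfold auxF
      rw [← Finset.add_sum_erase _ _ (Finset.mem_univ iq), hδq]
      norm_num
    have hT : Filter.Tendsto (auxF γ δ ε kstar) (𝓝[>] a)
        (𝓝 ((∑ i ∈ Finset.univ.erase iq, γ i * δ i ^ 2 / (1 - γ i / γ iq) ^ 2)
          + 2 * ε ^ 2 / γ iq - kstar)) := by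
      rw [hfeq]; exact hrest
    exact (aux_isGLB hSmem hlb hT).csInf_eq ((Set.nonempty_Ioo.2 hac).image _)
  · intro hδq
    have hsplit : auxF γ δ ε kstar = fun lam =>
        γ iq * δ iq ^ 2 / (1 - lam * γ iq) ^ 2 +
        ((∑ i ∈ Finset.univ.erase iq, γ i * δ i ^ 2 / (1 - lam * γ i) ^ 2)
          + 2 * ε ^ 2 * lam - kstar) := by
      funext lam
      unfold auxF
      rw [← Finset.add_sum_erase _ _ (Finset.mem_univ iq)]
      ring
    have hdenom : Filter.Tendsto (fun lam => (1 - lam * γ iq) ^ 2) (𝓝[>] a) (𝓝[>] 0) := by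
      refine tendsto_nhdsWithin_of_tendsto_nhds_of_eventually_within _ ?_ ?_
      · have h0 : (1 - a * γ iq) ^ 2 = 0 := by
          rw [hadef, inv_mul_cancel₀ hneg.ne]; norm_num
        have := ((by fun_prop : Continuous fun lam : ℝ => (1 - lam * γ iq) ^ 2).tendsto a).mono_left
          (nhdsWithin_le_nhds (s := Set.Ioi a))
        rwa [h0] at this
      · filter_upwards [self_mem_nhdsWithin] with y (hy : a < y)
        have h1 : y * γ iq < 1 := by
          have := mul_lt_mul_of_neg_right hy hneg
          rwa [hadef, inv_mul_cancel₀ hneg.ne] at this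
        exact Set.mem_Ioi.2 (pow_pos (by linarith) 2)
    have hterm : Filter.Tendsto (fun lam => γ iq * δ iq ^ 2 / (1 - lam * γ iq) ^ 2)
        (𝓝[>] a) atBot := by
      have hC : γ iq * δ iq ^ 2 < 0 := mul_neg_of_neg_of_pos hneg (pow_pos hδq 2)
      have := (tendsto_inv_nhdsGT_zero.comp hdenom).const_mul_atTop_of_neg hC
      simpa [div_eq_mul_inv, Function.comp] using this
    have hT : Filter.Tendsto (auxF γ δ ε kstar) (𝓝[>] a) atBot := by
      rw [hsplit]
      exact hterm.atBot_add hrest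
    exact aux_not_bddBelow hSmem hT

lemma aux_inf_pos {q : ℕ} (γ δ : Fin q → ℝ) (ε kstar : ℝ) (c : ℝ)
    (hall : ∀ i, 0 < γ i)
    (hmono : StrictMonoOn (auxF γ δ ε kstar) (Set.Iio c)) :
    (ε = 0 → sInf (auxF γ δ ε kstar '' Set.Iio c) = -kstar) ∧
    (0 < ε → ¬ BddBelow (auxF γ δ ε kstar '' Set.Iio c)) := by
  have hSmem : ∀ᶠ x in atBot, x ∈ Set.Iio c := eventually_lt_atBot c
  have hlb : ∀ x ∈ Set.Iio c, ∀ᶠ y in atBot, auxF γ δ ε kstar y ≤ auxF γ δ ε kstar x := by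
    intro x hx
    filter_upwards [eventually_lt_atBot x] with y hy
    exact (hmono (Set.mem_Iio.2 (hy.trans hx)) hx hy).le
  have hsum0 : Filter.Tendsto (fun lam => ∑ i, γ i * δ i ^ 2 / (1 - lam * γ i) ^ 2)
      atBot (𝓝 0) := by
    have h0 : (0 : ℝ) = ∑ _i : Fin q, (0 : ℝ) := by simp
    rw [h0]
    refine tendsto_finset_sum _ fun i _ => ?_
    have hd1 : Filter.Tendsto (fun lam : ℝ => 1 - lam * γ i) atBot atTop := by
      have h1 : Filter.Tendsto (fun lam : ℝ => lam * γ i) atBot atBot :=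
        tendsto_id.atBot_mul_const (hall i)
      have h2 : Filter.Tendsto (fun lam : ℝ => -(lam * γ i)) atBot atTop :=
        tendsto_neg_atBot_atTop.comp h1
      have := tendsto_atTop_add_const_left atBot (1 : ℝ) h2
      simpa [sub_eq_add_neg] using this
    have hd2 : Filter.Tendsto (fun lam : ℝ => (1 - lam * γ i) ^ 2) atBot atTop :=
      (tendsto_pow_atTop two_ne_zero).comp hd1
    exact Filter.Tendsto.div_atTop tendsto_const_nhds hd2
  constructor
  · intro hε0
    have hlin : Filter.Tendsto (fun lam : ℝ => 2 * ε ^ 2 * lam) atBot (𝓝 0) := by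
      rw [hε0]
      simpa using tendsto_const_nhds (α := ℝ) (f := atBot) (a := (0:ℝ))
    have hT : Filter.Tendsto (auxF γ δ ε kstar) atBot (𝓝 (-kstar)) := by
      have := (hsum0.add hlin).sub_const kstar
      unfold auxF; simpa using this
    exact (aux_isGLB hSmem hlb hT).csInf_eq ((Set.nonempty_Iio).image _)
  · intro hε
    have hlin : Filter.Tendsto (fun lam : ℝ => 2 * ε ^ 2 * lam) atBot atBot :=
      tendsto_id.const_mul_atBot (by positivity)
    have hT : Filter.Tendsto (auxF γ δ ε kstar) atBot atBot := by
      have h1 := hsum0.add_atBot hlin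
      have := tendsto_atBot_add_const_right atBot (-kstar) h1
      unfold auxF; simpa [sub_eq_add_neg] using this
    exact aux_not_bddBelow hSmem hT



/-- Key properties of `f(λ) = Σᵢ γᵢδᵢ²/(1 − λγᵢ)² + 2ε²λ − k*` on the interior `Λ°`
of the admissible region: if `δ = 0` and `ε = 0` then `f ≡ −k*`; otherwise `f` is
continuous and strictly increasing on `Λ°`, its supremum over `Λ°` is `f₁` when
`δ₁ = 0` and `+∞` (unbounded above) when `δ₁ > 0`, and its infimum is `f_q` / `−∞`
according as `δ_q = 0` / `δ_q > 0` when `γ_q < 0`, and `−k*` / `−∞` according as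
`ε = 0` / `ε > 0` when `γ_q > 0`. -/
theorem stmt16 {q : ℕ} (hq : 0 < q) (γ : Fin q → ℝ) (hanti : StrictAnti γ)
    (hne : ∀ i, γ i ≠ 0) (hpos : 0 < γ ⟨0, hq⟩)
    (δ : Fin q → ℝ) (hδ : ∀ i, 0 ≤ δ i) (ε : ℝ) (hε : 0 ≤ ε) (kstar : ℝ) :
    let i0 : Fin q := ⟨0, hq⟩
    let iq : Fin q := ⟨q - 1, Nat.sub_lt hq one_pos⟩
    let f : ℝ → ℝ := fun lam =>
      (∑ i, γ i * δ i ^ 2 / (1 - lam * γ i) ^ 2) + 2 * ε ^ 2 * lam - kstar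
    let Λ : Set ℝ := if 0 < γ iq then Set.Iio (γ i0)⁻¹ else Set.Ioo (γ iq)⁻¹ (γ i0)⁻¹
    let f1 : ℝ := (∑ i ∈ Finset.univ.erase i0, γ i * δ i ^ 2 / (1 - γ i / γ i0) ^ 2)
      + 2 * ε ^ 2 / γ i0 - kstar
    let fqq : ℝ := (∑ i ∈ Finset.univ.erase iq, γ i * δ i ^ 2 / (1 - γ i / γ iq) ^ 2)
      + 2 * ε ^ 2 / γ iq - kstar
    ((δ = 0 ∧ ε = 0) → ∀ lam ∈ Λ, f lam = -kstar) ∧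
    ((δ ≠ 0 ∨ ε ≠ 0) →
      ContinuousOn f Λ ∧ StrictMonoOn f Λ ∧
      (δ i0 = 0 → sSup (f '' Λ) = f1) ∧
      (0 < δ i0 → ¬ BddAbove (f '' Λ)) ∧
      (γ iq < 0 →
        (δ iq = 0 → sInf (f '' Λ) = fqq) ∧ (0 < δ iq → ¬ BddBelow (f '' Λ))) ∧
      (0 < γ iq →
        (ε = 0 → sInf (f '' Λ) = -kstar) ∧ (0 < ε → ¬ BddBelow (f '' Λ)))) := by
  intro i0 iq f Λ f1 fqq
  have hffun : f = auxF γ δ ε kstar := rfl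
  have hc : 0 < (γ i0)⁻¹ := inv_pos.2 hpos
  have h01 : ∀ lam < (γ i0)⁻¹, lam * γ i0 < 1 := by
    intro lam hlam
    have := mul_lt_mul_of_pos_right hlam hpos
    rwa [inv_mul_cancel₀ hpos.ne'] at this
  have hle0 : ∀ i, γ i ≤ γ i0 := fun i => hanti.antitone (Fin.le_def.2 (Nat.zero_le _))
  have hleq : ∀ i, γ iq ≤ γ i := fun i => hanti.antitone (Fin.le_def.2 (Nat.le_pred_of_lt i.isLt))
  constructor
  · rintro ⟨h1, h2⟩ lam _
    subst h1; subst h2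
    simp only [f]
    simp
  · intro hne0
    by_cases hcase : 0 < γ iq
    · -- all γ i positive
      have hΛ : Λ = Set.Iio (γ i0)⁻¹ := if_pos hcase
      have hall : ∀ i, 0 < γ i := fun i => hcase.trans_le (hleq i)
      have hSpos : ∀ lam ∈ Set.Iio (γ i0)⁻¹, ∀ i, 0 < 1 - lam * γ i := by
        intro lam hlam i
        rcases le_or_gt lam 0 with h | h
        · have := mul_nonpos_of_nonpos_of_nonneg h (hall i).le
          linarith
        · have h2 : lam * γ i ≤ lam * γ i0 := mul_le_mul_of_nonneg_left (hle0 i) h.le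
          have h3 := h01 lam hlam
          linarith
      obtain ⟨hcont, hmono, hsup, hubdd⟩ := aux_main hq γ hanti hne hpos δ hδ ε kstar
        (Set.Iio (γ i0)⁻¹) isOpen_Iio (convex_Iio _) Set.nonempty_Iio hSpos
        (le_refl _) self_mem_nhdsWithin hne0
      rw [hΛ, hffun]
      refine ⟨hcont, hmono, hsup, hubdd, ?_, ?_⟩
      · intro h; exact (lt_asymm hcase h).elim
      · intro _
        exact aux_inf_pos γ δ ε kstar (γ i0)⁻¹ hall hmono
    · -- γ iq < 0
      have hneg : γ iq < 0 := lt_of_le_of_ne (not_lt.1 hcase) (hne iq)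
      have ha : (γ iq)⁻¹ < 0 := inv_neg''.2 hneg
      have hac : (γ iq)⁻¹ < (γ i0)⁻¹ := ha.trans hc
      have hΛ : Λ = Set.Ioo (γ iq)⁻¹ (γ i0)⁻¹ := if_neg hcase
      have hSpos : ∀ lam ∈ Set.Ioo (γ iq)⁻¹ (γ i0)⁻¹, ∀ i, 0 < 1 - lam * γ i := by
        intro lam hlam i
        rcases (hne i).lt_or_gt with hγ | hγ
        · rcases le_or_gt 0 lam with h | h
          · have := mul_nonpos_of_nonneg_of_nonpos h hγ.le
            linarith
          · have h2 : lam * γ i ≤ lam * γ iq := mul_le_mul_of_nonpos_left (hleq i) h.le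
            have h3 : lam * γ iq < (γ iq)⁻¹ * γ iq := mul_lt_mul_of_neg_right hlam.1 hneg
            rw [inv_mul_cancel₀ hneg.ne] at h3
            linarith
        · rcases le_or_gt lam 0 with h | h
          · have := mul_nonpos_of_nonpos_of_nonneg h hγ.le
            linarith
          · have h2 : lam * γ i ≤ lam * γ i0 := mul_le_mul_of_nonneg_left (hle0 i) h.le
            have h3 := h01 lam hlam.2
            linarith
      obtain ⟨hcont, hmono, hsup, hubdd⟩ := aux_main hq γ hanti hne hpos δ hδ ε kstar
        (Set.Ioo (γ iq)⁻¹ (γ i0)⁻¹) isOpen_Ioo (convex_Ioo _ _) (Set.nonempty_Ioo.2 hac)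
        hSpos (fun x hx => hx.2) (Ioo_mem_nhdsLT_of_mem ⟨hac, le_refl _⟩) hne0
      rw [hΛ, hffun]
      refine ⟨hcont, hmono, hsup, hubdd, ?_, ?_⟩
      · intro _
        exact aux_inf_neg hq γ hanti hne hpos hneg δ hδ ε kstar hmono
      · intro h; exact (lt_asymm h hneg).elim
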